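/- Let M : [0,1] → Sp(2N) be a C¹ path of symplectic matrices and let t ↦ v(t) ∈ ker(M(t) − I) be a C¹ path of vectors in the kernel. Then the crossing form vanishes on these vectors: Γ(M,t)(v(t)) := ⟨v(t), −J₀ Ṁ(t) M(t)⁻¹ v(t)⟩ = 0 for all t. -/

import Mathlib

open Matrix

abbrev V (n : ℕ) := Fin n ⊕ Fin n

/-- The standard complex structure `J₀ = [[0,-I],[I,0]]` on `ℝ^{2n}`. -/
noncomputable def J0 (n : ℕ) : Matrix (V n) (V n) ℝ :=
  Matrix.fromBlocks 0 (-1) 1 0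

/-- The standard complex structure `J̃₀` on `ℝ^{2n} ⊕ ℝ^m ⊕ ℝ^m`. -/
noncomputable def Jt0 (n m : ℕ) : Matrix (V n ⊕ V m) (V n ⊕ V m) ℝ :=
  Matrix.fromBlocks (J0 n) 0 0 (J0 m)

/-- `Ψ` is symplectic: `Ψᵀ J₀ Ψ = J₀`. -/
def IsSymplectic {n : ℕ} (Ψ : Matrix (V n) (V n) ℝ) : Prop :=
  Ψᵀ * J0 n * Ψ = J0 n

/-- The block matrix `M(Ψ,X,E) = [[Ψ, ΨX, 0],[0, I, 0],[XᵀJ₀, E + ½XᵀJ₀X, I]]`. -/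
noncomputable def Mblk {n m : ℕ} (Ψ : Matrix (V n) (V n) ℝ) (X : Matrix (V n) (Fin m) ℝ)
    (E : Matrix (Fin m) (Fin m) ℝ) : Matrix (V n ⊕ V m) (V n ⊕ V m) ℝ :=
  Matrix.fromBlocks Ψ (Matrix.fromCols (Ψ * X) 0)
    (Matrix.fromRows 0 (Xᵀ * J0 n))
    (Matrix.fromBlocks 1 0 (E + (1 / 2 : ℝ) • (Xᵀ * J0 n * X)) 1)

attribute [local instance] Matrix.normedAddCommGroup Matrix.normedSpace

lemma J0_mul_J0' (n : ℕ) : J0 n * J0 n = -1 := by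
  have h1 : (-1 : Matrix (V n) (V n) ℝ) = Matrix.fromBlocks (-1) (-0) (-0) (-1) := by
    rw [← Matrix.fromBlocks_neg, Matrix.fromBlocks_one]
  simp [J0, Matrix.fromBlocks_multiply, h1]

lemma det_J0_sq' (n : ℕ) : (J0 n).det * (J0 n).det = 1 := by
  rw [← Matrix.det_mul, J0_mul_J0', Matrix.det_neg, Matrix.det_one]
  simp [Fintype.card_sum]

lemma isUnit_det_of_sympl {n : ℕ} {M : Matrix (V n) (V n) ℝ} (h : IsSymplectic M) :
    IsUnit M.det := by
  have hd := congrArg Matrix.det h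
  rw [Matrix.det_mul, Matrix.det_mul, Matrix.det_transpose] at hd
  have hJ : (J0 n).det ≠ 0 := by
    intro h0; have := det_J0_sq' n; rw [h0] at this; simp at this
  refine isUnit_iff_ne_zero.2 fun h0 => hJ ?_
  rw [h0] at hd; simpa using hd.symm

lemma mulVec_dotProduct_eq {n m : Type*} [Fintype n] [Fintype m]
    (A : Matrix m n ℝ) (x : n → ℝ) (y : m → ℝ) :
    (A *ᵥ x) ⬝ᵥ y = x ⬝ᵥ (Aᵀ *ᵥ y) := by
  rw [dotProduct_comm, Matrix.dotProduct_mulVec, dotProduct_comm,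
    Matrix.mulVec_transpose]

/-- If `M(t)` is a `C¹` path of symplectic matrices and `v(t)` a `C¹` path of
vectors with `v(t) ∈ ker(M(t) − I)`, then the crossing form vanishes on them:
`⟨v(t), −J₀ Ṁ(t) M(t)⁻¹ v(t)⟩ = 0`. -/
theorem stmt9 {N : ℕ} (M M' : ℝ → Matrix (V N) (V N) ℝ)
    (v v' : ℝ → V N → ℝ)
    (hM : ∀ t, HasDerivAt M (M' t) t)
    (hsympl : ∀ t, IsSymplectic (M t))
    (hv : ∀ t, HasDerivAt v (v' t) t)
    (hker : ∀ t, (M t).mulVec (v t) = v t) :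
    ∀ t : ℝ, v t ⬝ᵥ (-(J0 N * M' t * (M t)⁻¹)).mulVec (v t) = 0 := by
  intro t
  -- derivative identity: v' = M' v + M v'
  have hMij : ∀ i j, HasDerivAt (fun s => M s i j) (M' t i j) t := fun i j =>
    hasDerivAt_pi.1 (hasDerivAt_pi.1 (hM t) i) j
  have hvj : ∀ j, HasDerivAt (fun s => v s j) (v' t j) t :=
    fun j => hasDerivAt_pi.1 (hv t) j
  have hmv : HasDerivAt (fun s => (M s).mulVec (v s))
      ((M' t).mulVec (v t) + (M t).mulVec (v' t)) t := by
    rw [hasDerivAt_pi]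
    intro i
    have : HasDerivAt (fun s => ∑ j, M s i j * v s j)
        (∑ j, (M' t i j * v t j + M t i j * v' t j)) t :=
      HasDerivAt.fun_sum fun j _ => (hMij i j).mul (hvj j)
    simpa [Matrix.mulVec, dotProduct, Finset.sum_add_distrib] using this
  rw [show (fun s => (M s).mulVec (v s)) = v from funext hker] at hmv
  have hderiv : (M' t) *ᵥ v t = v' t - (M t) *ᵥ v' t := by
    have := (hv t).unique hmv
    exact eq_sub_of_add_eq this.symm
  -- invertibility and M⁻¹ v = v
  have hu : IsUnit (M t).det := isUnit_det_of_sympl (hsympl t)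
  have hinv : (M t)⁻¹ *ᵥ v t = v t := by
    conv_lhs => rw [← hker t]
    rw [Matrix.mulVec_mulVec, Matrix.nonsing_inv_mul _ hu, Matrix.one_mulVec]
  -- main computation
  rw [Matrix.neg_mulVec, dotProduct_neg, Matrix.mul_assoc,
    ← Matrix.mulVec_mulVec, ← Matrix.mulVec_mulVec, hinv, hderiv,
    Matrix.mulVec_sub, dotProduct_sub]
  have key : v t ⬝ᵥ (J0 N) *ᵥ ((M t) *ᵥ v' t) = v t ⬝ᵥ (J0 N) *ᵥ v' t := by
    conv_lhs => rw [← hker t]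
    rw [Matrix.mulVec_mulVec, mulVec_dotProduct_eq, Matrix.mulVec_mulVec,
      ← Matrix.mul_assoc, hsympl t]
  rw [key, sub_self, neg_zero]
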